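/- Let H be a symmetric real Hadamard matrix of order n, let ℓ ∈ {0,1}, and let P and Q be {±1}-monomial matrices such that P·H·Qᵀ = (-1)^ℓ·H. Then for every odd positive integer j, the matrix n^{(1-j)/2}·(P·H)^j is a real Hadamard matrix of order n. -/

import Mathlib

/-- A real Hadamard matrix: entries in `{±1}` and `H * Hᵀ = n • 1`. -/
def IsHadamard {ι : Type*} [Fintype ι] [DecidableEq ι] (H : Matrix ι ι ℝ) : Prop :=
  (∀ i j, H i j = 1 ∨ H i j = -1) ∧ H * H.transpose = (Fintype.card ι : ℝ) • 1

/-- A `{±1}`-monomial matrix: exactly one nonzero entry, equal to `±1`,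
in each row and each column. -/
def IsSignedMonomial {ι : Type*} [Fintype ι] [DecidableEq ι] (P : Matrix ι ι ℝ) : Prop :=
  ∃ (σ : Equiv.Perm ι) (d : ι → ℝ), (∀ j, d j = 1 ∨ d j = -1) ∧
    ∀ i j, P i j = if i = σ j then d j else 0

open Matrix

private lemma sm_apply_left {ι : Type*} [Fintype ι] [DecidableEq ι] {P : Matrix ι ι ℝ}
    (σ : Equiv.Perm ι) (d : ι → ℝ)
    (hPe : ∀ i j, P i j = if i = σ j then d j else 0)
    (A : Matrix ι ι ℝ) (i j : ι) :
    (P * A) i j = d (σ.symm i) * A (σ.symm i) j := by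
  rw [Matrix.mul_apply, Finset.sum_eq_single (σ.symm i)]
  · rw [hPe]; simp
  · intro k _ hk
    rw [hPe, if_neg, zero_mul]
    intro he
    exact hk (by rw [he, Equiv.symm_apply_apply])
  · simp

private lemma sm_one {ι : Type*} [Fintype ι] [DecidableEq ι] :
    IsSignedMonomial (1 : Matrix ι ι ℝ) :=
  ⟨1, fun _ => 1, fun _ => Or.inl rfl, fun i j => by simp [Matrix.one_apply]; rfl⟩

private lemma sm_orth {ι : Type*} [Fintype ι] [DecidableEq ι] {P : Matrix ι ι ℝ}
    (hP : IsSignedMonomial P) : P * Pᵀ = 1 := by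
  obtain ⟨σ, d, hd, hPe⟩ := hP
  ext i j
  rw [sm_apply_left σ d hPe]
  simp only [Matrix.transpose_apply, hPe, Equiv.apply_symm_apply, Matrix.one_apply]
  by_cases hij : i = j
  · subst hij
    rw [if_pos rfl, if_pos rfl]
    rcases hd (σ.symm i) with h | h <;> rw [h] <;> norm_num
  · rw [if_neg (Ne.symm hij), if_neg hij, mul_zero]

private lemma sm_mul {ι : Type*} [Fintype ι] [DecidableEq ι] {P Q : Matrix ι ι ℝ}
    (hP : IsSignedMonomial P) (hQ : IsSignedMonomial Q) :
    IsSignedMonomial (P * Q) := by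
  obtain ⟨σ, d, hd, hPe⟩ := hP
  obtain ⟨τ, e, he, hQe⟩ := hQ
  refine ⟨σ * τ, fun j => d (τ j) * e j, fun j => ?_, fun i j => ?_⟩
  · rcases hd (τ j) with h | h <;> rcases he j with h' | h' <;> simp [h, h']
  · rw [sm_apply_left σ d hPe, hQe]
    simp only [Equiv.Perm.mul_apply]
    by_cases hc : i = σ (τ j)
    · have h2 : σ.symm i = τ j := by rw [hc, Equiv.symm_apply_apply]
      rw [if_pos h2, h2]; exact (if_pos hc).symm
    · rw [if_neg, mul_zero]; exact (if_neg hc).symm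
      intro h2; exact hc (by rw [← h2, Equiv.apply_symm_apply])

private lemma sm_pow {ι : Type*} [Fintype ι] [DecidableEq ι] {N : Matrix ι ι ℝ}
    (hN : IsSignedMonomial N) (k : ℕ) : IsSignedMonomial (N ^ k) := by
  induction k with
  | zero => rw [pow_zero]; exact sm_one
  | succ m ih => rw [pow_succ]; exact sm_mul ih hN

private lemma sm_smul {ι : Type*} [Fintype ι] [DecidableEq ι] {P : Matrix ι ι ℝ} {c : ℝ}
    (hc : c = 1 ∨ c = -1) (hP : IsSignedMonomial P) :
    IsSignedMonomial (c • P) := by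
  obtain ⟨σ, d, hd, hPe⟩ := hP
  refine ⟨σ, fun j => c * d j, fun j => ?_, fun i j => ?_⟩
  · rcases hc with h | h <;> rcases hd j with h' | h' <;> simp [h, h']
  · simp [hPe, mul_ite]

private lemma sm_mul_pm {ι : Type*} [Fintype ι] [DecidableEq ι] {P A : Matrix ι ι ℝ}
    (hP : IsSignedMonomial P) (hA : ∀ i j, A i j = 1 ∨ A i j = -1) :
    ∀ i j, (P * A) i j = 1 ∨ (P * A) i j = -1 := by
  obtain ⟨σ, d, hd, hPe⟩ := hP
  intro i j
  rw [sm_apply_left σ d hPe]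
  rcases hd (σ.symm i) with h | h <;> rcases hA (σ.symm i) j with h' | h' <;>
    rw [h, h'] <;> norm_num

theorem stmt_7 (n : ℕ) (hn : 0 < n) (H P Q : Matrix (Fin n) (Fin n) ℝ)
    (hH : _root_.IsHadamard H) (hsym : H.IsSymm)
    (hP : IsSignedMonomial P) (hQ : IsSignedMonomial Q)
    (ℓ : ℕ) (hℓ : ℓ = 0 ∨ ℓ = 1)
    (h : P * H * Q.transpose = ((-1 : ℝ) ^ ℓ) • H)
    (j : ℕ) (hj : Odd j) (hj0 : 0 < j) :
    _root_.IsHadamard ((Real.sqrt n ^ ((1 : ℤ) - (j : ℤ))) • (P * H) ^ j) := by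
  obtain ⟨k, hk⟩ := hj
  subst hk
  set ε : ℝ := (-1 : ℝ) ^ ℓ with hε
  have hεpm : ε = 1 ∨ ε = -1 := by rcases hℓ with rfl | rfl <;> simp [hε]
  have hQo : Q.transpose * Q = 1 := mul_eq_one_comm.mp (sm_orth hQ)
  have hPH : P * H = ε • (H * Q) := by
    have h2 := congrArg (fun X => X * Q) h
    simpa [Matrix.mul_assoc, hQo, Matrix.smul_mul] using h2
  have hcard : (Fintype.card (Fin n) : ℝ) = (n : ℝ) := by simp
  have hHH : H * H = (n : ℝ) • 1 := by
    have h2 := hH.2; rwa [hsym.eq, hcard] at h2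
  set M : Matrix (Fin n) (Fin n) ℝ := P * H with hM
  set N : Matrix (Fin n) (Fin n) ℝ := ε • (P * Q) with hN
  have hNsm : IsSignedMonomial N := sm_smul hεpm (sm_mul hP hQ)
  have hM2 : M * M = (n : ℝ) • N := by
    calc M * M = M * (ε • (H * Q)) := by rw [← hPH]
    _ = ε • (P * ((H * H) * Q)) := by
        rw [Matrix.mul_smul, hM]; simp [Matrix.mul_assoc]
    _ = (n : ℝ) • N := by
        rw [hHH, Matrix.smul_mul, Matrix.one_mul, Matrix.mul_smul, smul_comm, hN]
  have hMpow : M ^ (2 * k + 1) = (n : ℝ) ^ k • (N ^ k * M) := by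
    rw [pow_succ, pow_mul, show M ^ 2 = M * M from sq M, hM2, smul_pow, Matrix.smul_mul]
  have hn0 : (0 : ℝ) < (n : ℝ) := by exact_mod_cast hn
  have hsq : Real.sqrt n ^ 2 = (n : ℝ) := Real.sq_sqrt (le_of_lt hn0)
  have hscal : (Real.sqrt n ^ ((1 : ℤ) - ((2 * k + 1 : ℕ) : ℤ))) = ((n : ℝ) ^ k)⁻¹ := by
    have he : ((1 : ℤ) - ((2 * k + 1 : ℕ) : ℤ)) = -((2 * k : ℕ) : ℤ) := by push_cast; ring
    rw [he, _root_.zpow_neg, zpow_natCast, pow_mul, hsq]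
  have hmat : (Real.sqrt n ^ ((1 : ℤ) - ((2 * k + 1 : ℕ) : ℤ))) • M ^ (2 * k + 1)
      = N ^ k * M := by
    rw [hscal, hMpow, smul_smul, inv_mul_cancel₀ (by positivity), one_smul]
  rw [hmat]
  have hMent : ∀ i j, M i j = 1 ∨ M i j = -1 := by
    rw [hM]; exact sm_mul_pm hP hH.1
  have hMMt : M * Mᵀ = (n : ℝ) • 1 := by
    rw [hM, Matrix.transpose_mul]
    calc P * H * (Hᵀ * Pᵀ) = P * (H * Hᵀ) * Pᵀ := by simp [Matrix.mul_assoc]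
    _ = (n : ℝ) • (P * Pᵀ) := by
        rw [hH.2, hcard, Matrix.mul_smul, Matrix.mul_one, Matrix.smul_mul]
    _ = (n : ℝ) • 1 := by rw [sm_orth hP]
  refine ⟨sm_mul_pm (sm_pow hNsm k) hMent, ?_⟩
  rw [Matrix.transpose_mul]
  calc N ^ k * M * (Mᵀ * (N ^ k)ᵀ) = N ^ k * (M * Mᵀ) * (N ^ k)ᵀ := by
        simp [Matrix.mul_assoc]
  _ = (n : ℝ) • (N ^ k * (N ^ k)ᵀ) := by
        rw [hMMt, Matrix.mul_smul, Matrix.mul_one, Matrix.smul_mul]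
  _ = (Fintype.card (Fin n) : ℝ) • 1 := by rw [sm_orth (sm_pow hNsm k), hcard]
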